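/- In the overalgebra 𝐀 of the first type, for every β ∈ Con 𝐁 the relation β⋆ = ⋃_{k=0}^{K} β^k ∪ ⋃_{r=1}^{m} (C_r ∪ ⋃_{i∈ℐ_r} C_r^i)² is a congruence of 𝐀, and it is the smallest congruence θ of 𝐀 satisfying θ∩(B×B) = β (that is, β⋆ = β*, the congruence of 𝐀 generated by β). -/
import Mathlib


namespace Overalg

variable {A : Type*}

/-- `θ` is an equivalence relation on the whole type `A`, viewed as a set of pairs. -/
def IsEquivRel (θ : Set (A × A)) : Prop :=
  (∀ x : A, (x, x) ∈ θ) ∧ (∀ x y : A, (x, y) ∈ θ → (y, x) ∈ θ) ∧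
    (∀ x y z : A, (x, y) ∈ θ → (y, z) ∈ θ → (x, z) ∈ θ)

/-- `θ` is an equivalence relation on the subset `B` of `A`, viewed as a set of pairs. -/
def IsEquivOn (B : Set A) (θ : Set (A × A)) : Prop :=
  θ ⊆ B ×ˢ B ∧ (∀ x ∈ B, (x, x) ∈ θ) ∧ (∀ x y : A, (x, y) ∈ θ → (y, x) ∈ θ) ∧
    (∀ x y z : A, (x, y) ∈ θ → (y, z) ∈ θ → (x, z) ∈ θ)

/-- The clone of unary polynomials of the unary algebra `⟨A, F⟩`: the smallest set of
maps `A → A` containing `F`, the identity and all constants, closed under composition. -/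
inductive Pol1 (F : Set (A → A)) : (A → A) → Prop
  | base : ∀ f ∈ F, Pol1 F f
  | id : Pol1 F _root_.id
  | const : ∀ a : A, Pol1 F (fun _ => a)
  | comp : ∀ f g : A → A, Pol1 F f → Pol1 F g → Pol1 F (f ∘ g)

/-- A congruence of the unary algebra `⟨A, F⟩`. -/
def IsCon (F : Set (A → A)) (θ : Set (A × A)) : Prop :=
  IsEquivRel θ ∧ ∀ f ∈ F, ∀ p ∈ θ, (f p.1, f p.2) ∈ θ

end Overalg

namespace Overalg

/-- The data of an *overalgebra of the first type* built over a finite base algebra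
`𝐁 = ⟨B 0, F⟩` from a tie-point sequence `t 1, …, t K` and a partition
`T 1 | ⋯ | T N` of the index set `{1, …, K}`.  The universe is `A = B 0 ∪ ⋯ ∪ B K`,
where `B i ∩ B 0 = {t i}`, `π i : B 0 → B i` is a bijection fixing `t i`,
`e0` maps each `π i b` back to `b`, and `s n` collapses each `B i` with `i ∈ T n`
to its tie-point `t i` and is the identity elsewhere. -/
structure OvI (A : Type*) where
  K : ℕ
  N : ℕ
  B : ℕ → Set A
  F : Set (A → A)
  t : ℕ → A
  π : ℕ → A → A
  T : ℕ → Set ℕ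
  e0 : A → A
  s : ℕ → A → A
  hfin : Finite A
  /-- `A = B 0 ∪ B 1 ∪ ⋯ ∪ B K` -/
  hA : ∀ x : A, ∃ i ≤ K, x ∈ B i
  /-- the base operations map `B 0` into itself -/
  hF : ∀ f ∈ F, Set.MapsTo f (B 0) (B 0)
  /-- each tie-point `t i` lies in `B 0`, and `B i ∩ B 0 = {t i}` -/
  ht : ∀ i, 1 ≤ i → i ≤ K → t i ∈ B 0 ∧ B i ∩ B 0 = {t i}
  /-- for `i ≠ j`: `B i ∩ B j = {t i}` if `t i = t j`, and `B i ∩ B j = ∅` otherwise -/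
  hdisj : ∀ i j, 1 ≤ i → i ≤ K → 1 ≤ j → j ≤ K → i ≠ j →
    (t i = t j → B i ∩ B j = {t i}) ∧ (t i ≠ t j → B i ∩ B j = ∅)
  /-- `π 0` is the identity -/
  hπ0 : ∀ x : A, π 0 x = x
  /-- `π i` is a bijection of `B 0` onto `B i` -/
  hπbij : ∀ i, 1 ≤ i → i ≤ K → Set.BijOn (π i) (B 0) (B i)
  /-- `π i` fixes the tie-point `t i` -/
  hπt : ∀ i, 1 ≤ i → i ≤ K → π i (t i) = t i
  /-- each block `T n` consists of indices in `{1, …, K}` -/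
  hT1 : ∀ n, 1 ≤ n → n ≤ N → T n ⊆ Set.Icc 1 K
  /-- the blocks `T 1, …, T N` partition `{1, …, K}` -/
  hT2 : ∀ i, 1 ≤ i → i ≤ K → ∃! n, 1 ≤ n ∧ n ≤ N ∧ i ∈ T n
  /-- `e0 (π i b) = b` for `b ∈ B 0`; this says `e0 x = π_{ιx}⁻¹ x` -/
  he0 : ∀ i ≤ K, ∀ b ∈ B 0, e0 (π i b) = b
  /-- `s n` collapses `B i` to `t i` for `i ∈ T n` … -/
  hs1 : ∀ n, 1 ≤ n → n ≤ N → ∀ i ∈ T n, ∀ x ∈ B i, s n x = t i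
  /-- … and is the identity elsewhere -/
  hs2 : ∀ n, 1 ≤ n → n ≤ N → ∀ x : A, (∀ i ∈ T n, x ∉ B i) → s n x = x

namespace OvI

variable {A : Type*} (O : OvI A)

/-- `e k = π k ∘ e0`: the idempotent map of `A` onto `B k`. -/
def e (k : ℕ) : A → A := fun x => O.π k (O.e0 x)

/-- The operations of the overalgebra:
`F_A = {f ∘ e0 : f ∈ F} ∪ {e k : 0 ≤ k ≤ K} ∪ {s n : 1 ≤ n ≤ N}`. -/
def FA : Set (A → A) :=
  {g | ∃ f ∈ O.F, g = f ∘ O.e0} ∪ {g | ∃ k ≤ O.K, g = O.e k} ∪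
    {g | ∃ n, 1 ≤ n ∧ n ≤ O.N ∧ g = O.s n}

/-- A congruence of the base algebra `𝐁 = ⟨B 0, F⟩`. -/
def ConB (β : Set (A × A)) : Prop :=
  IsEquivOn (O.B 0) β ∧ ∀ f ∈ O.F, ∀ p ∈ β, (f p.1, f p.2) ∈ β

/-- The `β`-class of `c`. -/
def cls (_O : OvI A) (β : Set (A × A)) (c : A) : Set A := {x | (c, x) ∈ β}

/-- `β^k = {(π k x, π k y) : (x, y) ∈ β}`, the copy of `β` on `B k`. -/
def bk (β : Set (A × A)) (k : ℕ) : Set (A × A) :=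
  {p | ∃ q ∈ β, p = (O.π k q.1, O.π k q.2)}

/-- For `c ∈ B 0` with class `C = c/β`, this is `C ∪ ⋃_{i ∈ ℐ} π i '' C`, where
`ℐ = {i : t i ∈ C}` — a block of `β⋆` meeting `B 0`. -/
def blk (β : Set (A × A)) (c : A) : Set A :=
  O.cls β c ∪ ⋃ i ∈ {i | 1 ≤ i ∧ i ≤ O.K ∧ (c, O.t i) ∈ β}, O.π i '' O.cls β c

/-- `β⋆ = ⋃_{k=0}^{K} β^k ∪ ⋃_{r=1}^{m} (C_r ∪ ⋃_{i∈ℐ_r} C_r^i)²`. -/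
def bstar (β : Set (A × A)) : Set (A × A) :=
  {p | ∃ k ≤ O.K, p ∈ O.bk β k} ∪
    {p | ∃ c ∈ O.B 0, p.1 ∈ O.blk β c ∧ p.2 ∈ O.blk β c}

/-- For `c, d ∈ B 0` in distinct `β`-classes `C_r = c/β`, `C_ℓ = d/β`, this is
`⋃_{i ∈ T n ∩ ℐ_r} C_ℓ^i`. -/
def wing (β : Set (A × A)) (n : ℕ) (c d : A) : Set A :=
  ⋃ i ∈ {i | i ∈ O.T n ∧ (c, O.t i) ∈ β}, O.π i '' O.cls β d

/-- `β̃ = β⋆ ∪ ⋃_{n=1}^{N} ⋃_{r=1}^m ⋃_{ℓ≠r} (⋃_{i ∈ 𝒯_n ∩ ℐ_r} C_ℓ^i)²`. -/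
def btilde (β : Set (A × A)) : Set (A × A) :=
  O.bstar β ∪
    {p | ∃ n, 1 ≤ n ∧ n ≤ O.N ∧ ∃ c ∈ O.B 0, ∃ d ∈ O.B 0, (c, d) ∉ β ∧
      p.1 ∈ O.wing β n c d ∧ p.2 ∈ O.wing β n c d}

end OvI

end Overalg

namespace Overalg
namespace OvI

variable {A : Type*} {O : OvI A} {β : Set (A × A)}

lemma e0_fix {x : A} (hx : x ∈ O.B 0) : O.e0 x = x := by
  have h := O.he0 0 (Nat.zero_le _) x hx
  rwa [O.hπ0] at h

lemma pi_mem {k : ℕ} {a : A} (hk : k ≤ O.K) (ha : a ∈ O.B 0) : O.π k a ∈ O.B k := by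
  rcases Nat.eq_zero_or_pos k with rfl | h1
  · rw [O.hπ0]; exact ha
  · exact (O.hπbij k h1 hk).mapsTo ha

lemma pi_eq_t {i : ℕ} {x : A} (h1 : 1 ≤ i) (hi : i ≤ O.K) (hx : x ∈ O.B 0)
    (h : O.π i x = O.t i) : x = O.t i := by
  rw [← O.he0 i hi x hx, h, e0_fix (O.ht i h1 hi).1]

lemma pi_mem_B0 {i : ℕ} {x : A} (h1 : 1 ≤ i) (hi : i ≤ O.K) (hx : x ∈ O.B 0)
    (hm : O.π i x ∈ O.B 0) : x = O.t i ∧ O.π i x = O.t i := by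
  have hmem : O.π i x ∈ O.B i ∩ O.B 0 := ⟨pi_mem hi hx, hm⟩
  rw [(O.ht i h1 hi).2] at hmem
  have h2 := Set.eq_of_mem_singleton hmem
  exact ⟨pi_eq_t h1 hi hx h2, h2⟩

lemma pi_cross {i j : ℕ} {x y : A} (hi1 : 1 ≤ i) (hj1 : 1 ≤ j) (hij : i ≠ j)
    (hi : i ≤ O.K) (hj : j ≤ O.K) (hx : x ∈ O.B 0) (hy : y ∈ O.B 0)
    (h : O.π i x = O.π j y) : x = O.t i ∧ y = O.t j := by
  have hmem : O.π i x ∈ O.B i ∩ O.B j := ⟨pi_mem hi hx, by rw [h]; exact pi_mem hj hy⟩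
  by_cases htt : O.t i = O.t j
  · rw [(O.hdisj i j hi1 hi hj1 hj hij).1 htt] at hmem
    have h1 : O.π i x = O.t i := Set.eq_of_mem_singleton hmem
    have h2 : O.π j y = O.t j := by rw [← h, h1, htt]
    exact ⟨pi_eq_t hi1 hi hx h1, pi_eq_t hj1 hj hy h2⟩
  · rw [(O.hdisj i j hi1 hi hj1 hj hij).2 htt] at hmem
    exact absurd hmem (Set.notMem_empty _)

lemma pi_pi {i j : ℕ} {x y : A} (hi : i ≤ O.K) (hj : j ≤ O.K)
    (hx : x ∈ O.B 0) (hy : y ∈ O.B 0) (h : O.π i x = O.π j y) :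
    x = y ∧ (i ≠ j → (1 ≤ i → x = O.t i) ∧ (1 ≤ j → y = O.t j)) := by
  have hxy : x = y := by rw [← O.he0 i hi x hx, h, O.he0 j hj y hy]
  refine ⟨hxy, fun hij => ⟨fun hi1 => ?_, fun hj1 => ?_⟩⟩
  · rcases Nat.eq_zero_or_pos j with rfl | hj1'
    · rw [O.hπ0] at h
      exact (pi_mem_B0 hi1 hi hx (by rw [h]; exact hy)).1
    · exact (pi_cross hi1 hj1' hij hi hj hx hy h).1
  · rcases Nat.eq_zero_or_pos i with rfl | hi1'
    · rw [O.hπ0] at h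
      exact (pi_mem_B0 hj1 hj hy (by rw [← h]; exact hx)).1
    · exact (pi_cross hi1' hj1 hij hi hj hx hy h).2

lemma mem_blk_cls {c x : A} (h : (c, x) ∈ β) : x ∈ O.blk β c := Or.inl h

lemma mem_blk_img {c w : A} {i : ℕ} (h1 : 1 ≤ i) (hi : i ≤ O.K)
    (ht : (c, O.t i) ∈ β) (hw : (c, w) ∈ β) : O.π i w ∈ O.blk β c :=
  Or.inr (Set.mem_biUnion ⟨h1, hi, ht⟩ ⟨w, hw, rfl⟩)

lemma blk_elim {c z : A} (h : z ∈ O.blk β c) :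
    (c, z) ∈ β ∨ ∃ i w, 1 ≤ i ∧ i ≤ O.K ∧ (c, O.t i) ∈ β ∧ (c, w) ∈ β ∧ z = O.π i w := by
  rcases h with h | h
  · exact Or.inl h
  · simp only [Set.mem_iUnion, Set.mem_image, Set.mem_setOf_eq, cls] at h
    obtain ⟨i, ⟨h1, hiK, hti⟩, w, hw, heq⟩ := h
    exact Or.inr ⟨i, w, h1, hiK, hti, hw, heq.symm⟩

lemma mem_bstar_bk {a b : A} {k : ℕ} (hk : k ≤ O.K) (h : (a, b) ∈ β) :
    (O.π k a, O.π k b) ∈ O.bstar β :=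
  Or.inl ⟨k, hk, ⟨(a, b), h, rfl⟩⟩

lemma mem_bstar_blk {c x y : A} (hc : c ∈ O.B 0) (hx : x ∈ O.blk β c)
    (hy : y ∈ O.blk β c) : (x, y) ∈ O.bstar β := Or.inr ⟨c, hc, hx, hy⟩

lemma beta_sub_bstar : β ⊆ O.bstar β := by
  rintro ⟨x, y⟩ h
  have h2 := mem_bstar_bk (Nat.zero_le O.K) h
  rwa [O.hπ0, O.hπ0] at h2

lemma bstar_elim {x y : A} (h : (x, y) ∈ O.bstar β) :
    (∃ k a b, k ≤ O.K ∧ (a, b) ∈ β ∧ x = O.π k a ∧ y = O.π k b) ∨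
    (∃ c ∈ O.B 0, x ∈ O.blk β c ∧ y ∈ O.blk β c) := by
  rcases h with ⟨k, hk, q, hq, hpq⟩ | h
  · exact Or.inl ⟨k, q.1, q.2, hk, hq, (Prod.ext_iff.mp hpq).1, (Prod.ext_iff.mp hpq).2⟩
  · exact Or.inr h

variable (hβ : O.ConB β)
include hβ

lemma blk_e0 {c z : A} (h : z ∈ O.blk β c) : (c, O.e0 z) ∈ β := by
  rcases blk_elim h with h | ⟨i, w, h1, hi, hti, hw, rfl⟩
  · rw [e0_fix (hβ.1.1 h).2]; exact h
  · rw [O.he0 i hi w (hβ.1.1 hw).2]; exact hw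

lemma bstar_e0 {x y : A} (h : (x, y) ∈ O.bstar β) : (O.e0 x, O.e0 y) ∈ β := by
  rcases bstar_elim h with ⟨k, a, b, hk, hab, rfl, rfl⟩ | ⟨c, hc, hx, hy⟩
  · rw [O.he0 k hk a (hβ.1.1 hab).1, O.he0 k hk b (hβ.1.1 hab).2]; exact hab
  · exact hβ.1.2.2.2 _ _ _ (hβ.1.2.2.1 _ _ (blk_e0 hβ hx)) (blk_e0 hβ hy)

lemma blk_inter {c c' z : A} (h : z ∈ O.blk β c) (h' : z ∈ O.blk β c') : (c, c') ∈ β :=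
  hβ.1.2.2.2 _ _ _ (blk_e0 hβ h) (hβ.1.2.2.1 _ _ (blk_e0 hβ h'))

lemma blk_mono {c c' : A} (h : (c', c) ∈ β) : O.blk β c ⊆ O.blk β c' := by
  intro z hz
  rcases blk_elim hz with h1 | ⟨i, w, hi1, hiK, hti, hw, rfl⟩
  · exact mem_blk_cls (hβ.1.2.2.2 _ _ _ h h1)
  · exact mem_blk_img hi1 hiK (hβ.1.2.2.2 _ _ _ h hti) (hβ.1.2.2.2 _ _ _ h hw)

lemma pi_mem_blk {c a b : A} {k : ℕ} (hk : k ≤ O.K)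
    (hab : (a, b) ∈ β) (hyblk : O.π k b ∈ O.blk β c) : O.π k a ∈ O.blk β c := by
  obtain ⟨⟨hsub, hrefl, hsym, htrans⟩, -⟩ := hβ
  have hbB : b ∈ O.B 0 := (hsub hab).2
  rcases blk_elim hyblk with hy | ⟨i, w, h1, hi, hti, hw, heq⟩
  · have hyB : O.π k b ∈ O.B 0 := (hsub hy).2
    rcases Nat.eq_zero_or_pos k with rfl | hk1
    · rw [O.hπ0] at hy ⊢
      exact mem_blk_cls (htrans _ _ _ hy (hsym _ _ hab))
    · have hbt : b = O.t k := (pi_mem_B0 hk1 hk hbB hyB).1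
      have hpt : O.π k b = O.t k := (pi_mem_B0 hk1 hk hbB hyB).2
      have hct : (c, O.t k) ∈ β := by rw [← hpt]; exact hy
      have hca : (c, a) ∈ β :=
        htrans _ _ _ hct (hsym _ _ (by rw [hbt] at hab; exact hab))
      exact mem_blk_img hk1 hk hct hca
  · have hwB : w ∈ O.B 0 := (hsub hw).2
    obtain ⟨hbw, hrest⟩ := pi_pi hk hi hbB hwB heq
    have hcb : (c, b) ∈ β := by rw [hbw]; exact hw
    have hca : (c, a) ∈ β := htrans _ _ _ hcb (hsym _ _ hab)
    rcases Nat.eq_zero_or_pos k with rfl | hk1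
    · rw [O.hπ0]; exact mem_blk_cls hca
    · by_cases hki : k = i
      · exact mem_blk_img hk1 hk (by rw [hki]; exact hti) hca
      · have hbt : b = O.t k := (hrest hki).1 hk1
        exact mem_blk_img hk1 hk (by rw [← hbt]; exact hcb) hca

lemma bstar_refl (x : A) : (x, x) ∈ O.bstar β := by
  obtain ⟨i, hi, hxi⟩ := O.hA x
  rcases Nat.eq_zero_or_pos i with rfl | h1
  · exact beta_sub_bstar (hβ.1.2.1 x hxi)
  · obtain ⟨b, hb, rfl⟩ := (O.hπbij i h1 hi).surjOn hxi
    exact mem_bstar_bk hi (hβ.1.2.1 b hb)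

lemma bstar_symm {x y : A} (h : (x, y) ∈ O.bstar β) : (y, x) ∈ O.bstar β := by
  rcases bstar_elim h with ⟨k, a, b, hk, hab, rfl, rfl⟩ | ⟨c, hc, hx, hy⟩
  · exact mem_bstar_bk hk (hβ.1.2.2.1 _ _ hab)
  · exact mem_bstar_blk hc hy hx

lemma bstar_trans {x y z : A} (hxy : (x, y) ∈ O.bstar β) (hyz : (y, z) ∈ O.bstar β) :
    (x, z) ∈ O.bstar β := by
  have hsym := hβ.1.2.2.1
  have htrans := hβ.1.2.2.2
  have hrefl := hβ.1.2.1
  rcases bstar_elim hxy with ⟨k, a, b, hk, hab, rfl, rfl⟩ | ⟨c, hc, hx, hy⟩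
  · rcases bstar_elim hyz with ⟨j, b', cc, hj, hbc, heq, rfl⟩ | ⟨c, hc, hy, hz⟩
    · have hbB : b ∈ O.B 0 := (hβ.1.1 hab).2
      have hb'B : b' ∈ O.B 0 := (hβ.1.1 hbc).1
      obtain ⟨hbb', hrest⟩ := pi_pi hk hj hbB hb'B heq
      have haB : a ∈ O.B 0 := (hβ.1.1 hab).1
      have hac : (a, cc) ∈ β := htrans _ _ _ hab (by rw [hbb']; exact hbc)
      by_cases hkj : k = j
      · subst hkj; exact mem_bstar_bk hk hac
      · refine mem_bstar_blk haB ?_ ?_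
        · rcases Nat.eq_zero_or_pos k with rfl | hk1
          · rw [O.hπ0]; exact mem_blk_cls (hrefl a haB)
          · have hbt : b = O.t k := (hrest hkj).1 hk1
            exact mem_blk_img hk1 hk (by rw [← hbt]; exact hab) (hrefl a haB)
        · rcases Nat.eq_zero_or_pos j with rfl | hj1
          · rw [O.hπ0]; exact mem_blk_cls hac
          · have hb't : b' = O.t j := (hrest hkj).2 hj1
            have hat : (a, O.t j) ∈ β := by rw [← hb't, ← hbb']; exact hab
            exact mem_blk_img hj1 hj hat hac
    · exact mem_bstar_blk hc (pi_mem_blk hβ hk hab hy) hz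
  · rcases bstar_elim hyz with ⟨j, b', cc, hj, hbc, heq, rfl⟩ | ⟨c', hc', hy', hz⟩
    · have hy2 : O.π j b' ∈ O.blk β c := by rw [← heq]; exact hy
      exact mem_bstar_blk hc hx (pi_mem_blk hβ hj (hsym _ _ hbc) hy2)
    · have hcc' : (c, c') ∈ β := blk_inter hβ hy hy'
      exact mem_bstar_blk hc' (blk_mono hβ (hsym _ _ hcc') hx) hz

omit hβ in
lemma s_fix {n k : ℕ} {x : A} (hn1 : 1 ≤ n) (hnN : n ≤ O.N) (hk : k ≤ O.K)
    (hxk : x ∈ O.B k) (hk0 : k = 0 ∨ k ∉ O.T n) : O.s n x = x := by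
  by_cases h : ∃ i ∈ O.T n, x ∈ O.B i
  · obtain ⟨i, hiT, hxi⟩ := h
    obtain ⟨hi1, hiK⟩ := Set.mem_Icc.mp (O.hT1 n hn1 hnN hiT)
    have hxt : x = O.t i := by
      rcases Nat.eq_zero_or_pos k with rfl | hk1
      · have hm : x ∈ O.B i ∩ O.B 0 := ⟨hxi, hxk⟩
        rw [(O.ht i hi1 hiK).2] at hm
        exact Set.eq_of_mem_singleton hm
      · have hknT : k ∉ O.T n := hk0.resolve_left (Nat.one_le_iff_ne_zero.mp hk1)
        have hik : i ≠ k := fun h => hknT (h ▸ hiT)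
        have hm : x ∈ O.B i ∩ O.B k := ⟨hxi, hxk⟩
        by_cases htik : O.t i = O.t k
        · rw [(O.hdisj i k hi1 hiK hk1 hk hik).1 htik] at hm
          exact Set.eq_of_mem_singleton hm
        · rw [(O.hdisj i k hi1 hiK hk1 hk hik).2 htik] at hm
          exact absurd hm (Set.notMem_empty _)
    rw [O.hs1 n hn1 hnN i hiT x hxi, hxt]
  · push_neg at h
    exact O.hs2 n hn1 hnN x h

lemma s_blk {n : ℕ} {c z : A} (hn1 : 1 ≤ n) (hnN : n ≤ O.N)
    (h : z ∈ O.blk β c) : O.s n z ∈ O.blk β c := by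
  rcases blk_elim h with hz | ⟨i, w, h1, hi, hti, hw, rfl⟩
  · rw [s_fix hn1 hnN (Nat.zero_le _) (hβ.1.1 hz).2 (Or.inl rfl)]
    exact mem_blk_cls hz
  · by_cases hT : i ∈ O.T n
    · rw [O.hs1 n hn1 hnN i hT _ (pi_mem hi (hβ.1.1 hw).2)]
      exact mem_blk_cls hti
    · rw [s_fix hn1 hnN hi (pi_mem hi (hβ.1.1 hw).2) (Or.inr hT)]
      exact mem_blk_img h1 hi hti hw

lemma bstar_comp : ∀ f ∈ O.FA, ∀ p ∈ O.bstar β, (f p.1, f p.2) ∈ O.bstar β := by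
  rintro f hf ⟨x, y⟩ hp
  rcases hf with (⟨g, hg, rfl⟩ | ⟨k, hk, rfl⟩) | ⟨n, hn1, hnN, rfl⟩
  · exact beta_sub_bstar (hβ.2 g hg (O.e0 x, O.e0 y) (bstar_e0 hβ hp))
  · exact mem_bstar_bk hk (bstar_e0 hβ hp)
  · rcases bstar_elim hp with ⟨k, a, b, hk, hab, rfl, rfl⟩ | ⟨c, hc, hx, hy⟩
    · have haB : a ∈ O.B 0 := (hβ.1.1 hab).1
      have hbB : b ∈ O.B 0 := (hβ.1.1 hab).2
      rcases Nat.eq_zero_or_pos k with rfl | hk1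
      · simp only [O.hπ0]
        rw [s_fix hn1 hnN (Nat.zero_le _) haB (Or.inl rfl),
            s_fix hn1 hnN (Nat.zero_le _) hbB (Or.inl rfl)]
        exact beta_sub_bstar hab
      · by_cases hT : k ∈ O.T n
        · rw [O.hs1 n hn1 hnN k hT _ (pi_mem hk haB), O.hs1 n hn1 hnN k hT _ (pi_mem hk hbB)]
          exact beta_sub_bstar (hβ.1.2.1 _ (O.ht k hk1 hk).1)
        · rw [s_fix hn1 hnN hk (pi_mem hk haB) (Or.inr hT),
              s_fix hn1 hnN hk (pi_mem hk hbB) (Or.inr hT)]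
          exact mem_bstar_bk hk hab
    · exact mem_bstar_blk hc (s_blk hβ hn1 hnN hx) (s_blk hβ hn1 hnN hy)

lemma bstar_le {θ : Set (A × A)} (hθ : IsCon O.FA θ) (hβθ : β ⊆ θ) :
    O.bstar β ⊆ θ := by
  obtain ⟨⟨href, hsym, htr⟩, hcomp⟩ := hθ
  have hek : ∀ k ≤ O.K, O.e k ∈ O.FA := fun k hk => Or.inl (Or.inr ⟨k, hk, rfl⟩)
  have key : ∀ k ≤ O.K, ∀ a b, (a, b) ∈ β → (O.π k a, O.π k b) ∈ θ := by
    intro k hk a b hab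
    have h1 := hcomp _ (hek k hk) (a, b) (hβθ hab)
    simpa [OvI.e, e0_fix (hβ.1.1 hab).1, e0_fix (hβ.1.1 hab).2] using h1
  rintro ⟨x, y⟩ hp
  rcases bstar_elim hp with ⟨k, a, b, hk, hab, rfl, rfl⟩ | ⟨c, hc, hx, hy⟩
  · exact key k hk a b hab
  · have hblk : ∀ w ∈ O.blk β c, (c, w) ∈ θ := by
      intro w hw
      rcases blk_elim hw with h1 | ⟨i, u, hi1, hiK, hti, hu, rfl⟩
      · exact hβθ h1
      · have h2 : (O.π i c, O.π i u) ∈ θ := key i hiK c u hu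
        have h3 : (O.π i c, O.π i (O.t i)) ∈ θ := key i hiK c (O.t i) hti
        rw [O.hπt i hi1 hiK] at h3
        exact htr _ _ _ (htr _ _ _ (hβθ hti) (hsym _ _ h3)) h2
    exact htr _ _ _ (hsym _ _ (hblk x hx)) (hblk y hy)

lemma bstar_trace : O.bstar β ∩ (O.B 0 ×ˢ O.B 0) = β := by
  ext ⟨x, y⟩
  constructor
  · rintro ⟨h1, h2⟩
    have h3 := bstar_e0 hβ h1
    rwa [e0_fix h2.1, e0_fix h2.2] at h3
  · intro h
    exact ⟨beta_sub_bstar h, (hβ.1.1 h).1, (hβ.1.1 h).2⟩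

end OvI
end Overalg

open Overalg OvI in
/-- In an overalgebra `𝐀` of the first type, for every `β ∈ Con 𝐁` the relation `β⋆`
is a congruence of `𝐀`; it is the smallest congruence `θ` of `𝐀` with `θ ∩ (B×B) = β`,
i.e. `β⋆ = β*`, the congruence of `𝐀` generated by `β`. -/
theorem bstar_isLeast {A : Type*} (O : OvI A) (β : Set (A × A)) (hβ : O.ConB β) :
    IsCon O.FA (O.bstar β) ∧
    IsLeast {θ : Set (A × A) | IsCon O.FA θ ∧ θ ∩ (O.B 0 ×ˢ O.B 0) = β} (O.bstar β) ∧
    O.bstar β = ⋂₀ {θ : Set (A × A) | IsCon O.FA θ ∧ β ⊆ θ} := by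
  have hcon : IsCon O.FA (O.bstar β) :=
    ⟨⟨fun x => bstar_refl hβ x, fun x y h => bstar_symm hβ h,
      fun x y z h1 h2 => bstar_trans hβ h1 h2⟩, bstar_comp hβ⟩
  refine ⟨hcon, ⟨⟨hcon, bstar_trace hβ⟩, ?_⟩, ?_⟩
  · rintro θ ⟨hθ, hθβ⟩
    exact bstar_le hβ hθ (hθβ ▸ Set.inter_subset_left)
  · refine Set.Subset.antisymm ?_ ?_
    · exact Set.subset_sInter fun θ hθ => bstar_le hβ hθ.1 hθ.2
    · exact Set.sInter_subset_of_mem ⟨hcon, beta_sub_bstar⟩
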